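/- Let X ∈ Sp(2p,2n) and X_⊥ a 2n×(2n-2p) full-rank matrix whose columns span the orthogonal complement of the column space of X. Then the 2n×2n matrix [X J_{2p} , J_{2n} X_⊥] is invertible. -/

import Mathlib

open Matrix

noncomputable def J (m : ℕ) : Matrix (Fin m ⊕ Fin m) (Fin m ⊕ Fin m) ℝ :=
  Matrix.fromBlocks 0 1 (-1) 0

lemma J_mul_J (m : ℕ) : _root_.J m * _root_.J m = -1 := by
  unfold _root_.J
  rw [Matrix.fromBlocks_multiply, ← Matrix.fromBlocks_one, Matrix.fromBlocks_neg]
  norm_num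

theorem sp_concat_invertible (p n : ℕ) (hpn : p ≤ n)
    (X : Matrix (Fin n ⊕ Fin n) (Fin p ⊕ Fin p) ℝ)
    (hX : Xᵀ * J n * X = J p)
    (Xperp : Matrix (Fin n ⊕ Fin n) (Fin (2 * n - 2 * p)) ℝ)
    (hrank : Xperp.rank = 2 * n - 2 * p)
    (horth : Xperpᵀ * X = 0) :
    ∃ B : Matrix ((Fin p ⊕ Fin p) ⊕ Fin (2 * n - 2 * p)) (Fin n ⊕ Fin n) ℝ,
      Matrix.fromCols (X * J p) (J n * Xperp) * B = 1 ∧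
      B * Matrix.fromCols (X * J p) (J n * Xperp) = 1 := by
  set G : Matrix (Fin (2 * n - 2 * p)) (Fin (2 * n - 2 * p)) ℝ := Xperpᵀ * Xperp with hG
  -- G is invertible
  have hGrank : G.rank = Fintype.card (Fin (2 * n - 2 * p)) := by
    rw [hG, Matrix.rank_transpose_mul_self, hrank, Fintype.card_fin]
  have hGunit : IsUnit G := by
    rw [← Matrix.mulVec_surjective_iff_isUnit]
    have htop : LinearMap.range G.mulVecLin = ⊤ := by
      apply Submodule.eq_top_of_finrank_eq
      rw [← Matrix.rank, hGrank, Module.finrank_pi]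
    have hs : Function.Surjective G.mulVecLin := LinearMap.range_eq_top.mp htop
    intro y
    obtain ⟨x, hx⟩ := hs y
    exact ⟨x, by simpa using hx⟩
  have hGdet : IsUnit G.det := (Matrix.isUnit_iff_isUnit_det G).mp hGunit
  have hGinv : G⁻¹ * G = 1 := Matrix.nonsing_inv_mul G hGdet
  set C₁ : Matrix (Fin p ⊕ Fin p) (Fin n ⊕ Fin n) ℝ := -(Xᵀ * J n) with hC₁
  set C₂ : Matrix (Fin (2 * n - 2 * p)) (Fin n ⊕ Fin n) ℝ := -(G⁻¹ * Xperpᵀ * J n) with hC₂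
  have hXperpX : Xᵀ * Xperp = 0 := by
    have := congrArg Matrix.transpose horth
    simpa using this
  have h11 : C₁ * (X * J p) = 1 := by
    have : C₁ * (X * J p) = -((Xᵀ * J n * X) * J p) := by
      rw [hC₁]; simp [Matrix.mul_assoc]
    rw [this, hX, J_mul_J]; simp
  have h12 : C₁ * (J n * Xperp) = 0 := by
    have : C₁ * (J n * Xperp) = -(Xᵀ * ((J n * J n) * Xperp)) := by
      rw [hC₁]; simp [Matrix.mul_assoc]
    rw [this, J_mul_J]; simp [hXperpX]
  have h22 : C₂ * (J n * Xperp) = 1 := by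
    have : C₂ * (J n * Xperp) = -(G⁻¹ * ((Xperpᵀ * ((J n * J n) * Xperp)))) := by
      rw [hC₂]; simp [Matrix.mul_assoc]
    rw [this, J_mul_J]
    simp only [Matrix.neg_mul, Matrix.mul_neg, neg_neg, Matrix.one_mul, Matrix.mul_one]
    rw [← Matrix.mul_assoc, ← hG] at *
    exact hGinv
  set K : Matrix (Fin (2 * n - 2 * p)) (Fin p ⊕ Fin p) ℝ := C₂ * (X * J p) with hK
  set B : Matrix ((Fin p ⊕ Fin p) ⊕ Fin (2 * n - 2 * p)) (Fin n ⊕ Fin n) ℝ :=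
    (Matrix.fromBlocks 1 0 (-K) 1 : Matrix ((Fin p ⊕ Fin p) ⊕ Fin (2 * n - 2 * p)) ((Fin p ⊕ Fin p) ⊕ Fin (2 * n - 2 * p)) ℝ) * Matrix.fromRows C₁ C₂ with hB
  have hBM : B * Matrix.fromCols (X * J p) (J n * Xperp) = 1 := by
    rw [hB, Matrix.mul_assoc, Matrix.fromRows_mul_fromCols, h11, h12, h22, ← hK,
      Matrix.fromBlocks_multiply]
    simp only [Matrix.one_mul, Matrix.mul_one, Matrix.zero_mul, Matrix.mul_zero, add_zero,
      zero_add, neg_add_cancel]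
    exact Matrix.fromBlocks_one
  have e : ((Fin p ⊕ Fin p) ⊕ Fin (2 * n - 2 * p)) ≃ (Fin n ⊕ Fin n) := by
    apply Fintype.equivOfCardEq
    simp only [Fintype.card_sum, Fintype.card_fin]
    omega
  exact ⟨B, (Matrix.mul_eq_one_comm_of_equiv e.symm).mpr hBM, hBM⟩
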